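/- arXiv:2112.14321 — 7 statements merged into one kernel-verified Lean document; each statement's English description precedes it below -/
import Mathlib

section
/- For any real ν̄ with |ν̄| ≤ 1/4, setting ν' = ν̄(1 + (3/2)ν̄), if ν satisfies ν̄ = ν - ν²(3+2ν)/(2(1+ν)²) and |ν| ≤ 1/4, then |ν - ν'| ≤ C|ν|³ for an explicit constant C (e.g. C = 16). -/
/-- Halley compensation error: if `ν̄ = ν - ν²(3+2ν)/(2(1+ν)²)`, `|ν̄| ≤ 1/4`, `|ν| ≤ 1/4`,
and `ν' = ν̄(1 + (3/2)ν̄)`, then `|ν - ν'| ≤ 16|ν|³`. -/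
theorem halley_compensation_cubic (ν ν' : ℝ) (hν : |ν| ≤ 1 / 4)
    (hν' : |ν'| ≤ 1 / 4) (h : ν' = ν - ν ^ 2 * (3 + 2 * ν) / (2 * (1 + ν) ^ 2)) :
    |ν - ν' * (1 + 3 / 2 * ν')| ≤ 16 * |ν| ^ 3 := by
  obtain ⟨hl, hr⟩ := abs_le.mp hν
  have hne : (1 + ν) ≠ 0 := by nlinarith
  have key : ν - ν' * (1 + 3 / 2 * ν')
      = ν ^ 3 * (10 + 25 / 2 * ν + 4 * ν ^ 2) / (4 * (1 + ν) ^ 4) := by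
    rw [h]; field_simp; ring
  have hD : (0:ℝ) < 4 * (1 + ν) ^ 4 := by positivity
  have hP : |10 + 25 / 2 * ν + 4 * ν ^ 2| ≤ 107 / 8 := by
    rw [abs_le]; constructor <;> nlinarith
  rw [key, abs_div, abs_mul, abs_pow, abs_of_pos hD, div_le_iff₀ hD]
  have ha : (3:ℝ) / 4 ≤ 1 + ν := by linarith
  have h1 : (81:ℝ) / 256 ≤ (1 + ν) ^ 4 := by
    have := pow_le_pow_left₀ (by norm_num : (0:ℝ) ≤ 3 / 4) ha 4
    norm_num at this; linarith
  have h2 : (0:ℝ) ≤ |ν| ^ 3 := by positivity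
  nlinarith [mul_le_mul_of_nonneg_left hP h2]
end

section
/- If √(1/x) = y(1+ν) with x, y > 0 and |ν| < 1, then y + y·(1 - x y²)/2 = √(1/x) - y·ν²(3+2ν)/(2(1+ν)²). -/
/-- Exact expression of the Newton-step value:
`y + y(1 - x y²)/2 = √(1/x) - y·ν²(3+2ν)/(2(1+ν)²)`. -/
theorem newton_step_exact_expression (x y ν : ℝ) (hx : 0 < x) (hy : 0 < y)
    (hν : |ν| < 1) (h : Real.sqrt (1 / x) = y * (1 + ν)) :
    y + y * ((1 - x * y ^ 2) / 2) =
      Real.sqrt (1 / x) - y * (ν ^ 2 * (3 + 2 * ν) / (2 * (1 + ν) ^ 2)) := by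
  have hν1 : 0 < 1 + ν := by have := abs_lt.mp hν; linarith [this.1]
  have hsq : 1 / x = (y * (1 + ν)) ^ 2 := by
    rw [← h, Real.sq_sqrt (by positivity)]
  have hxval : x = 1 / (y ^ 2 * (1 + ν) ^ 2) := by
    field_simp at hsq ⊢
    nlinarith [hsq]
  rw [h, hxval]
  field_simp
  ring
end

section
/- The square root of a positive radix-2 floating-point number is never the exact midpoint of two consecutive floating-point numbers: if x = m·2^e with m an odd integer (or more generally x a precision-p binary float), then √x cannot equal (a+b)/2 for consecutive precision-p binary floats a < b, unless √x is itself a float. -/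
/-- The set of radix-2 floating-point numbers of precision `p`:
real numbers of the form `M · 2^E` with `M, E` integers and `|M| < 2^p`. -/
def Fp (p : ℕ) : Set ℝ := {x : ℝ | ∃ M E : ℤ, |M| < 2 ^ p ∧ x = (M : ℝ) * (2 : ℝ) ^ E}

/-- `b` is the successor of `a` in `Fp p`: they are consecutive floats. -/
def FpConsecutive (p : ℕ) (a b : ℝ) : Prop :=
  a ∈ Fp p ∧ b ∈ Fp p ∧ a < b ∧ ∀ f ∈ Fp p, ¬(a < f ∧ f < b)

/-- `r` has a representation with an even significand at precision `p`. -/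
def FpEven (p : ℕ) (r : ℝ) : Prop :=
  ∃ M E : ℤ, |M| < 2 ^ p ∧ 2 ∣ M ∧ r = (M : ℝ) * (2 : ℝ) ^ E

/-- `r` is a round-to-nearest, ties-to-even value of the real `x` at precision `p`. -/
def RNE (p : ℕ) (x r : ℝ) : Prop :=
  r ∈ Fp p ∧ (∀ f ∈ Fp p, |r - x| ≤ |f - x|) ∧
    ((∃ f ∈ Fp p, f ≠ r ∧ |f - x| = |r - x|) → FpEven p r)



lemma odd_part (n : ℕ) (hn : 0 < n) : ∃ u j : ℕ, ¬ 2 ∣ u ∧ n = 2 ^ j * u := by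
  refine ⟨n / 2 ^ n.factorization 2, n.factorization 2, ?_, ?_⟩
  · exact Nat.not_dvd_ordCompl Nat.prime_two hn.ne'
  · exact (Nat.ordProj_mul_ordCompl_eq_self n 2).symm

lemma odd_dyadic_eq {w u : ℕ} (hw : ¬ 2 ∣ w) (hu : ¬ 2 ∣ u) {c d : ℤ}
    (h : (w : ℝ) * 2 ^ c = (u : ℝ) * 2 ^ d) : w = u := by
  wlog hcd : c ≤ d generalizing w u c d
  · exact (this hu hw h.symm (le_of_not_ge hcd)).symm
  have h2 : (2 : ℝ) ^ d = 2 ^ c * 2 ^ (d - c).toNat := by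
    rw [← zpow_natCast (2:ℝ), ← zpow_add₀ (two_ne_zero), Int.toNat_of_nonneg (by linarith)]
    ring_nf
  rw [h2] at h
  have hc : (2:ℝ) ^ c ≠ 0 := zpow_ne_zero _ two_ne_zero
  have h3 : (w : ℝ) = (u : ℝ) * 2 ^ (d - c).toNat :=
    mul_right_cancel₀ hc (by rw [h]; ring)
  have h4 : w = u * 2 ^ (d - c).toNat := by exact_mod_cast h3
  rcases Nat.eq_zero_or_pos (d - c).toNat with h0 | h0
  · simpa [h0] using h4
  · exact absurd (h4 ▸ Dvd.dvd.mul_left (dvd_pow_self 2 h0.ne') u) hw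

lemma rescale (C e Ec : ℤ) (hle : e ≤ Ec) :
    (C : ℝ) * 2 ^ Ec = ((C * 2 ^ (Ec - e).toNat : ℤ) : ℝ) * 2 ^ e := by
  push_cast
  rw [mul_assoc, ← zpow_natCast (2:ℝ), ← zpow_add₀ two_ne_zero,
    Int.toNat_of_nonneg (by linarith), sub_add_cancel]

lemma sqrt_mid_aux (p : ℕ) (x : ℝ) (hx : ∃ M E : ℤ, |M| < 2 ^ p ∧ x = (M : ℝ) * (2 : ℝ) ^ E)
    (hxpos : 0 < x) (a b : ℝ)
    (ha : ∃ M E : ℤ, |M| < 2 ^ p ∧ a = (M : ℝ) * (2 : ℝ) ^ E)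
    (hb : ∃ M E : ℤ, |M| < 2 ^ p ∧ b = (M : ℝ) * (2 : ℝ) ^ E)
    (h : Real.sqrt x = (a + b) / 2) :
    ∃ M E : ℤ, |M| < 2 ^ p ∧ Real.sqrt x = (M : ℝ) * (2 : ℝ) ^ E := by
  obtain ⟨A, Ea, hA, haeq⟩ := ha
  obtain ⟨B, Eb, hB, hbeq⟩ := hb
  obtain ⟨M, E, hM, hxeq⟩ := hx
  have hspos : 0 < Real.sqrt x := Real.sqrt_pos.mpr hxpos
  obtain ⟨N, hsum⟩ : ∃ N : ℤ, a + b = (N : ℝ) * 2 ^ (min Ea Eb) := by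
    refine ⟨A * 2 ^ (Ea - min Ea Eb).toNat + B * 2 ^ (Eb - min Ea Eb).toNat, ?_⟩
    rw [haeq, hbeq, rescale A (min Ea Eb) Ea (min_le_left _ _),
      rescale B (min Ea Eb) Eb (min_le_right _ _)]
    push_cast
    ring
  have h21 : (2:ℝ) ^ (min Ea Eb - 1) = 2 ^ (min Ea Eb) / 2 := by
    rw [zpow_sub₀ two_ne_zero, zpow_one]
  have hseq : Real.sqrt x = (N : ℝ) * 2 ^ (min Ea Eb - 1) := by
    rw [h, hsum, h21]; ring
  have h2pos : (0:ℝ) < 2 ^ (min Ea Eb - 1) := by positivity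
  have hNpos : 0 < N := by
    rcases mul_pos_iff.mp (hseq ▸ hspos) with ⟨h', _⟩ | ⟨_, h'⟩
    · exact_mod_cast h'
    · linarith
  obtain ⟨u, j, hu, hNt⟩ := odd_part N.toNat (by omega)
  have hNcast : (N : ℝ) = (u : ℝ) * 2 ^ (j : ℤ) := by
    have hc : ((N.toNat : ℤ) : ℝ) = (N : ℝ) := by rw [Int.toNat_of_nonneg hNpos.le]
    rw [← hc]
    push_cast [hNt]
    rw [zpow_natCast]
    ring
  have hsu : Real.sqrt x = (u : ℝ) * 2 ^ (min Ea Eb - 1 + j) := by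
    rw [hseq, hNcast, zpow_add₀ two_ne_zero]; ring
  -- decompose x
  have h2E : (0:ℝ) < 2 ^ E := by positivity
  have hMpos : 0 < M := by
    rcases mul_pos_iff.mp (hxeq ▸ hxpos) with ⟨h', _⟩ | ⟨_, h'⟩
    · exact_mod_cast h'
    · linarith
  obtain ⟨w, i, hw, hMt⟩ := odd_part M.toNat (by omega)
  have hxw : x = (w : ℝ) * 2 ^ (E + i) := by
    have hMcast : (M : ℝ) = (w : ℝ) * 2 ^ (i : ℤ) := by
      have hc : ((M.toNat : ℤ) : ℝ) = (M : ℝ) := by rw [Int.toNat_of_nonneg hMpos.le]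
      rw [← hc]
      push_cast [hMt]
      rw [zpow_natCast]
      ring
    rw [hxeq, hMcast, zpow_add₀ two_ne_zero]; ring
  -- x = u^2 * 2^(2(min Ea Eb - 1 + j))
  have hxu : x = ((u ^ 2 : ℕ) : ℝ) * 2 ^ (2 * (min Ea Eb - 1 + j)) := by
    rw [← Real.sq_sqrt hxpos.le, hsu]
    push_cast
    rw [mul_pow, ← zpow_natCast ((2:ℝ) ^ (min Ea Eb - 1 + (j:ℤ))), ← zpow_mul]
    ring_nf
  have hu2 : ¬ 2 ∣ u ^ 2 := fun hd => hu (Nat.Prime.dvd_of_dvd_pow Nat.prime_two hd)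
  have hwu : w = u ^ 2 := odd_dyadic_eq hw hu2 (by rw [← hxw, hxu])
  -- bound
  have hMlt : M.toNat < 2 ^ p := by
    have h1 : (M.toNat : ℤ) < 2 ^ p := by
      rw [Int.toNat_of_nonneg hMpos.le]
      rwa [abs_of_pos hMpos] at hM
    exact_mod_cast h1
  have hwle : w ≤ M.toNat := Nat.le_of_dvd (by omega) ⟨2 ^ i, by rw [hMt]; ring⟩
  have hule : u ≤ u ^ 2 := Nat.le_self_pow two_ne_zero u
  have hult : u < 2 ^ p := lt_of_le_of_lt (le_trans hule (hwu ▸ hwle)) hMlt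
  refine ⟨(u : ℤ), min Ea Eb - 1 + j, ?_, ?_⟩
  · rw [abs_of_nonneg (Int.natCast_nonneg u)]
    exact_mod_cast hult
  · rw [hsu]; push_cast; ring

/-- The square root of a positive precision-`p` binary float is never the exact midpoint of two
consecutive floats, unless it is itself a float. -/
theorem sqrt_not_midpoint (p : ℕ) (x : ℝ) (hx : x ∈ Fp p) (hxpos : 0 < x)
    (a b : ℝ) (hab : FpConsecutive p a b) (h : Real.sqrt x = (a + b) / 2) :
    Real.sqrt x ∈ Fp p := by
  obtain ⟨ha, hb, -, -⟩ := hab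
  exact sqrt_mid_aux p x hx hxpos a b ha hb h
end

section
/- The reciprocal square root of a positive binary floating-point number is never the exact midpoint of two consecutive floating-point numbers: for x ∈ 𝔽, x > 0, 1/√x is either in 𝔽 or is not of the form (a+b)/2 for consecutive a, b ∈ 𝔽. -/
/-- The reciprocal square root of a positive precision-`p` binary float is either itself a float
or is never the exact midpoint of two consecutive floats. -/
theorem rsqrt_not_midpoint (p : ℕ) (x : ℝ) (hx : x ∈ Fp p) (hxpos : 0 < x) :
    1 / Real.sqrt x ∈ Fp p ∨
      ∀ a b : ℝ, FpConsecutive p a b → 1 / Real.sqrt x ≠ (a + b) / 2 := by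
  obtain ⟨Mx, Ex, hMx, hxeq⟩ := hx
  by_cases h : 1 / Real.sqrt x ∈ Fp p
  · exact Or.inl h
  right
  rintro a b ⟨⟨Ma, Ea, hMa, rfl⟩, ⟨Mb, Eb, hMb, rfl⟩, -, -⟩ hm
  apply h
  have hs : 0 < Real.sqrt x := Real.sqrt_pos.mpr hxpos
  have hmpos : 0 < 1 / Real.sqrt x := by positivity
  have hm2 : (1 / Real.sqrt x) * (1 / Real.sqrt x) * x = 1 := by
    rw [div_mul_div_comm, one_mul, Real.mul_self_sqrt hxpos.le]
    field_simp
  -- x's significand is positive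
  have hMxpos : 0 < Mx := by
    by_contra hc
    push_neg at hc
    have : x ≤ 0 := by
      rw [hxeq]
      have : (Mx : ℝ) ≤ 0 := by exact_mod_cast hc
      exact mul_nonpos_of_nonpos_of_nonneg this (by positivity)
    linarith
  have hp1 : (1 : ℤ) < 2 ^ p := lt_of_le_of_lt (by omega : (1:ℤ) ≤ Mx) (by simpa [abs_of_pos hMxpos] using hMx)
  -- write the midpoint as K * 2^(E-1)
  set E := min Ea Eb with hE
  set K : ℤ := Ma * 2 ^ (Ea - E).toNat + Mb * 2 ^ (Eb - E).toNat with hK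
  have hcast : ∀ (M : ℤ) (F : ℤ), E ≤ F →
      (M : ℝ) * (2:ℝ) ^ F = ((M * 2 ^ (F - E).toNat : ℤ) : ℝ) * (2:ℝ) ^ E := by
    intro M F hF
    obtain ⟨n, hn⟩ : ∃ n : ℕ, F = (n : ℤ) + E := ⟨(F - E).toNat, by omega⟩
    rw [show (F - E).toNat = n by omega, hn, zpow_add₀ (by norm_num : (2:ℝ) ≠ 0), zpow_natCast]
    push_cast
    ring
  have hmK : 1 / Real.sqrt x = (K : ℝ) * (2:ℝ) ^ (E - 1) := by
    rw [hm, hcast Ma Ea (min_le_left _ _), hcast Mb Eb (min_le_right _ _), hK]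
    push_cast
    rw [show (E - 1 : ℤ) = E + (-1) by ring, zpow_add₀ (by norm_num : (2:ℝ) ≠ 0), zpow_neg, zpow_one]
    ring
  have hKpos : 0 < K := by
    by_contra hc
    push_neg at hc
    have : (K : ℝ) ≤ 0 := by exact_mod_cast hc
    nlinarith [zpow_pos (by norm_num : (0:ℝ) < 2) (E - 1), hmK, hmpos]
  -- factor out powers of 2 from K
  obtain ⟨k, N, hNodd, hKN⟩ :=
    Nat.exists_eq_pow_mul_and_not_dvd (n := K.toNat) (by omega) 2 (by norm_num)
  have hNpos : 0 < N := by
    rcases Nat.eq_zero_or_pos N with h0 | h0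
    · exfalso; apply hNodd; simp [h0]
    · exact h0
  have hKNe : (K : ℝ) = (N : ℝ) * (2:ℝ) ^ (k : ℤ) := by
    have : (K.toNat : ℝ) = (2:ℝ) ^ k * N := by exact_mod_cast congrArg (Nat.cast : ℕ → ℝ) hKN
    rw [show (K : ℝ) = (K.toNat : ℝ) by exact_mod_cast congrArg (Int.cast : ℤ → ℝ) (Int.toNat_of_nonneg hKpos.le).symm]
    rw [this, zpow_natCast]; ring
  set F : ℤ := E - 1 + k with hF
  have hmN : 1 / Real.sqrt x = (N : ℝ) * (2:ℝ) ^ F := by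
    rw [hmK, hKNe, hF, zpow_add₀ (by norm_num : (2:ℝ) ≠ 0)]
    ring
  -- the key diophantine equation
  set t : ℤ := -(2 * F + Ex) with ht
  have key : ((N * N * Mx.toNat : ℕ) : ℝ) = (2:ℝ) ^ t := by
    have h2 : (N : ℝ) * (N : ℝ) * (Mx : ℝ) * (2:ℝ) ^ (2 * F + Ex) = 1 := by
      have := hm2
      rw [hmN, hxeq] at this
      rw [show (2 * F + Ex : ℤ) = F + F + Ex by ring,
        zpow_add₀ (by norm_num : (2:ℝ) ≠ 0), zpow_add₀ (by norm_num : (2:ℝ) ≠ 0)]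
      nlinarith [this]
    have hMt : ((Mx.toNat : ℕ) : ℝ) = (Mx : ℝ) := by
      exact_mod_cast congrArg (Int.cast : ℤ → ℝ) (Int.toNat_of_nonneg hMxpos.le)
    push_cast
    rw [hMt, ht, zpow_neg]
    exact eq_inv_of_mul_eq_one_left (by linear_combination h2)
  have hMtpos : 0 < Mx.toNat := by omega
  have htnn : 0 ≤ t := by
    by_contra hc
    push_neg at hc
    have h1 : (2:ℝ) ^ t < 1 := zpow_lt_one_of_neg₀ one_lt_two hc
    have h2 : (1 : ℝ) ≤ ((N * N * Mx.toNat : ℕ) : ℝ) := by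
      have : 1 ≤ N * N * Mx.toNat := Nat.one_le_iff_ne_zero.mpr (by positivity)
      exact_mod_cast this
    linarith [key]
  have keyN : N * N * Mx.toNat = 2 ^ t.toNat := by
    have : ((N * N * Mx.toNat : ℕ) : ℝ) = ((2 ^ t.toNat : ℕ) : ℝ) := by
      rw [key]
      push_cast
      rw [← zpow_natCast (2:ℝ) t.toNat, Int.toNat_of_nonneg htnn]
    exact_mod_cast this
  -- N is odd and divides a power of 2, hence N = 1
  have hN1 : N = 1 := by
    have hcop : Nat.Coprime N 2 := (Nat.Prime.coprime_iff_not_dvd Nat.prime_two |>.mpr hNodd).symm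
    exact (hcop.pow_right t.toNat).eq_one_of_dvd ⟨N * Mx.toNat, by rw [← keyN]; ring⟩
  refine ⟨1, F, by simpa using hp1, ?_⟩
  rw [hmN, hN1]
  norm_num
end

section
/- If the computed Newton residual is ν̄(1+ε) and the final FMA step y_C = fl(y + y·ν̄(1+ε)) incurs a single rounding (1+δ₁) with |δ₁| ≤ u, and √(1/x) = y(1+ν) with |ν| ≤ c₁·u and |ε| ≤ u, then the relative error of y_C with respect to √(1/x) is at most u + C·u² for an explicit constant C depending on c₁. -/
set_option maxHeartbeats 800000

private lemma core_bound (c₁ u v ε δ₁ : ℝ) (hc : 0 ≤ c₁) (hu : 0 < u)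
    (h1 : c₁ * u ≤ 1 / 2) (hv : |v| ≤ c₁ * u) (he : |ε| ≤ u) (hd : |δ₁| ≤ u) :
    |(2 * (1 + v) ^ 2 + ((1 + v) ^ 2 - 1) * (1 + ε)) * (1 + δ₁) - 2 * (1 + v) ^ 3|
      ≤ 2 * (1 + v) ^ 3 * (u + (16 * c₁ ^ 2 + 18 * c₁ + 5) * u ^ 2) := by
  obtain ⟨hv1, hv2⟩ := abs_le.mp hv
  obtain ⟨he1, he2⟩ := abs_le.mp he
  obtain ⟨hd1, hd2⟩ := abs_le.mp hd
  have hvhalf1 : -(1/2) ≤ v := by linarith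
  have hvhalf2 : v ≤ 1/2 := by linarith
  have ht3 : (1:ℝ)/4 ≤ 2 * (1 + v) ^ 3 := by
    nlinarith [mul_nonneg (by linarith : (0:ℝ) ≤ v + 1/2) (sq_nonneg (1 + v)),
      sq_nonneg (v + 1/2), sq_nonneg (1 + v)]
  have ht3' : (0:ℝ) ≤ 2 * (1 + v) ^ 3 := by linarith
  have key : (2 * (1 + v) ^ 2 + ((1 + v) ^ 2 - 1) * (1 + ε)) * (1 + δ₁) - 2 * (1 + v) ^ 3
      = 2 * (1 + v) ^ 3 * δ₁ + (-(v ^ 2 * (3 + 2 * v))) * (1 + δ₁)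
        + v * (2 + v) * ε * (1 + δ₁) := by ring
  rw [key]
  have hA : |2 * (1 + v) ^ 3 * δ₁| ≤ 2 * (1 + v) ^ 3 * u := by
    rw [abs_mul, abs_of_nonneg ht3']
    exact mul_le_mul_of_nonneg_left hd ht3'
  have hv2sq : v ^ 2 ≤ (c₁ * u) ^ 2 := by nlinarith
  have h3v : |3 + 2 * v| ≤ 4 := by rw [abs_le]; constructor <;> linarith
  have h2v : |2 + v| ≤ 5/2 := by rw [abs_le]; constructor <;> linarith
  have h1d : |1 + δ₁| ≤ 1 + u := by rw [abs_le]; constructor <;> linarith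
  have hcu : (0:ℝ) ≤ (c₁ * u) * (1/2 - c₁ * u) :=
    mul_nonneg (mul_nonneg hc hu.le) (by linarith)
  have hB : |(-(v ^ 2 * (3 + 2 * v))) * (1 + δ₁)| ≤ (4 * c₁ ^ 2 + 2 * c₁) * u ^ 2 := by
    rw [abs_mul, abs_neg, abs_mul, abs_pow, sq_abs]
    have s1 : v ^ 2 * |3 + 2 * v| ≤ (c₁ * u) ^ 2 * 4 :=
      mul_le_mul hv2sq h3v (abs_nonneg _) (by positivity)
    have s2 : v ^ 2 * |3 + 2 * v| * |1 + δ₁| ≤ (c₁ * u) ^ 2 * 4 * (1 + u) :=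
      mul_le_mul s1 h1d (abs_nonneg _) (by positivity)
    have h4 : (0:ℝ) ≤ (c₁ * u) * u * (1 - 2 * (c₁ * u)) :=
      mul_nonneg (mul_nonneg (mul_nonneg hc hu.le) hu.le) (by linarith)
    linarith [s2, h4]
  have hC : |v * (2 + v) * ε * (1 + δ₁)| ≤ ((5/2) * c₁ + 5/4) * u ^ 2 := by
    rw [abs_mul, abs_mul, abs_mul]
    have s1 : |v| * |2 + v| ≤ (c₁ * u) * (5/2) :=
      mul_le_mul hv h2v (abs_nonneg _) (mul_nonneg hc hu.le)
    have s2 : |v| * |2 + v| * |ε| ≤ (c₁ * u) * (5/2) * u :=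
      mul_le_mul s1 he (abs_nonneg _) (by positivity)
    have s3 : |v| * |2 + v| * |ε| * |1 + δ₁| ≤ (c₁ * u) * (5/2) * u * (1 + u) :=
      mul_le_mul s2 h1d (abs_nonneg _) (by positivity)
    have h4 : (0:ℝ) ≤ u ^ 2 * (1/2 - c₁ * u) := mul_nonneg (sq_nonneg u) (by linarith)
    linarith [s3, h4]
  calc |2 * (1 + v) ^ 3 * δ₁ + (-(v ^ 2 * (3 + 2 * v))) * (1 + δ₁)
          + v * (2 + v) * ε * (1 + δ₁)|
      ≤ |2 * (1 + v) ^ 3 * δ₁| + |(-(v ^ 2 * (3 + 2 * v))) * (1 + δ₁)|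
          + |v * (2 + v) * ε * (1 + δ₁)| := abs_add_three _ _ _
    _ ≤ 2 * (1 + v) ^ 3 * u + (4 * c₁ ^ 2 + 2 * c₁) * u ^ 2
          + ((5/2) * c₁ + 5/4) * u ^ 2 := by linarith
    _ ≤ 2 * (1 + v) ^ 3 * (u + (16 * c₁ ^ 2 + 18 * c₁ + 5) * u ^ 2) := by
        have h5 : (1:ℝ)/4 * ((16 * c₁ ^ 2 + 18 * c₁ + 5) * u ^ 2)
            ≤ 2 * (1 + v) ^ 3 * ((16 * c₁ ^ 2 + 18 * c₁ + 5) * u ^ 2) :=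
          mul_le_mul_of_nonneg_right ht3 (by positivity)
        linarith [h5]

/-- Weak rounding bound for the compensated Newton step: if the computed residual is
`ν̄(1+ε)` and the final FMA incurs a single rounding `(1+δ₁)`, with `|ν| ≤ c₁·u`,
`|ε| ≤ u`, `|δ₁| ≤ u`, then the relative error of `y_C` is at most `u + C·u²` for a
constant `C` depending only on `c₁`. -/
theorem compensated_newton_weak_rounding (c₁ : ℝ) (hc₁ : 0 ≤ c₁) :
    ∃ C : ℝ, 0 < C ∧
      ∀ u x y ν ε δ₁ yC : ℝ,
        0 < u → c₁ * u ≤ 1 / 2 →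
        0 < x → 0 < y →
        Real.sqrt (1 / x) = y * (1 + ν) →
        |ν| ≤ c₁ * u → |ε| ≤ u → |δ₁| ≤ u →
        yC = (y + y * ((1 - x * y ^ 2) / 2) * (1 + ε)) * (1 + δ₁) →
        |yC - Real.sqrt (1 / x)| / Real.sqrt (1 / x) ≤ u + C * u ^ 2 := by
  refine ⟨16 * c₁ ^ 2 + 18 * c₁ + 5, by positivity, ?_⟩
  intro u x y ν ε δ₁ yC hu hcu hx hy hs hν hε hδ hyC
  set C := 16 * c₁ ^ 2 + 18 * c₁ + 5 with hC
  obtain ⟨hν1, hν2⟩ := abs_le.mp hν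
  have ht : 0 < 1 + ν := by linarith
  have hspos : 0 < Real.sqrt (1 / x) := Real.sqrt_pos.mpr (by positivity)
  have hsq : Real.sqrt (1 / x) ^ 2 = 1 / x := Real.sq_sqrt (by positivity)
  have hxy : x * y ^ 2 * (1 + ν) ^ 2 = 1 := by
    have : (y * (1 + ν)) ^ 2 = 1 / x := by rw [← hs]; exact hsq
    field_simp at this
    nlinarith [this]
  have hres : (1 - x * y ^ 2) / 2 = ((1 + ν) ^ 2 - 1) / (2 * (1 + ν) ^ 2) := by
    have ht2 : (1 + ν) ^ 2 ≠ 0 := by positivity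
    field_simp
    nlinarith [hxy]
  have hinner := core_bound c₁ u ν ε δ₁ hc₁ hu hcu hν hε hδ
  rw [div_le_iff₀ hspos]
  have key : yC - Real.sqrt (1 / x)
      = y / (2 * (1 + ν) ^ 2) *
        ((2 * (1 + ν) ^ 2 + ((1 + ν) ^ 2 - 1) * (1 + ε)) * (1 + δ₁) - 2 * (1 + ν) ^ 3) := by
    rw [hyC, hs, hres]
    field_simp
  rw [key, abs_mul]
  have hydiv : |y / (2 * (1 + ν) ^ 2)| = y / (2 * (1 + ν) ^ 2) :=
    abs_of_pos (by positivity)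
  rw [hydiv]
  calc y / (2 * (1 + ν) ^ 2) *
        |(2 * (1 + ν) ^ 2 + ((1 + ν) ^ 2 - 1) * (1 + ε)) * (1 + δ₁) - 2 * (1 + ν) ^ 3|
      ≤ y / (2 * (1 + ν) ^ 2) * (2 * (1 + ν) ^ 3 * (u + C * u ^ 2)) :=
        mul_le_mul_of_nonneg_left hinner (by positivity)
    _ = (u + C * u ^ 2) * (y * (1 + ν)) := by field_simp
    _ = (u + C * u ^ 2) * Real.sqrt (1 / x) := by rw [← hs]
end

section
/- Exactness of the residual σ: if r = fl(1/x) for x ∈ 𝔽 (so r = (1/x)(1+δ), |δ| ≤ u), then the quantity 1 - x·r satisfies |1 - x·r| ≤ u·(1+u), and 0.5 - (x/2)·r is representable exactly in 𝔽 (no rounding in the FMA fma(-x/2, r, 0.5)) provided no underflow/overflow occurs. -/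
lemma mem_Fp_of_le (p : ℕ) (hp : 1 ≤ p) (M E : ℤ) (h : |M| ≤ 2 ^ p) :
    (M : ℝ) * (2 : ℝ) ^ E ∈ Fp p := by
  rcases lt_or_eq_of_le h with h' | h'
  · exact ⟨M, E, h', rfl⟩
  · have h2 : (2 : ℤ) ∣ M := by
      have h3 : (2 : ℤ) ∣ |M| := by rw [h']; exact dvd_pow_self 2 (by omega)
      exact (dvd_abs 2 M).mp h3
    obtain ⟨M', rfl⟩ := h2
    refine ⟨M', E + 1, ?_, ?_⟩
    · have h4 : 2 * |M'| = 2 ^ p := by rw [← h', abs_mul]; norm_num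
      have h5 : (2:ℤ) ^ p = 2 * 2 ^ (p - 1) := by
        rw [← pow_succ']; congr 1; omega
      have h6 : |M'| = 2 ^ (p - 1) := by omega
      rw [h6]
      exact pow_lt_pow_right₀ one_lt_two (by omega)
    · push_cast
      rw [zpow_add₀ (two_ne_zero) E 1]
      ring

lemma Fp_normalize (p : ℕ) (hp : 1 ≤ p) {x : ℝ} (hx : x ∈ Fp p) (hx0 : x ≠ 0) :
    ∃ M E : ℤ, (2:ℤ) ^ (p - 1) ≤ |M| ∧ |M| < 2 ^ p ∧ x = (M : ℝ) * (2 : ℝ) ^ E := by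
  obtain ⟨M, E, hM, rfl⟩ := hx
  have hM0 : M ≠ 0 := by
    rintro rfl; simp at hx0
  have hMabs : |M| = (M.natAbs : ℤ) := Int.abs_eq_natAbs M
  set n := M.natAbs with hn
  have hn0 : n ≠ 0 := Int.natAbs_ne_zero.mpr hM0
  have hnp : n < 2 ^ p := by
    have h7 : (n:ℤ) < (2:ℤ) ^ p := by rwa [hMabs] at hM
    exact_mod_cast h7
  have hlog : n.log2 ≤ p - 1 := by
    have := (Nat.log2_lt hn0).mpr hnp
    omega
  set m := p - 1 - n.log2 with hm
  refine ⟨M * 2 ^ m, E - m, ?_, ?_, ?_⟩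
  · have h1 : 2 ^ n.log2 ≤ n := Nat.log2_self_le hn0
    have h8 : (2:ℤ) ^ (p-1) = 2 ^ n.log2 * 2 ^ m := by
      rw [← pow_add]; congr 1; omega
    rw [abs_mul, abs_pow, abs_two, h8, hMabs]
    apply mul_le_mul_of_nonneg_right _ (by positivity)
    exact_mod_cast h1
  · have h2 : n < 2 ^ (n.log2 + 1) := Nat.lt_log2_self
    rw [abs_mul, abs_pow, abs_two, hMabs]
    have h9 : (2:ℤ) ^ p = 2 ^ (n.log2 + 1) * 2 ^ m := by rw [← pow_add]; congr 1; omega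
    rw [h9]
    apply mul_lt_mul_of_pos_right _ (by positivity)
    exact_mod_cast h2
  · push_cast
    rw [mul_assoc, ← zpow_natCast (2:ℝ) m, ← zpow_add₀ (two_ne_zero : (2:ℝ) ≠ 0)]
    congr 2
    ring


set_option maxHeartbeats 1000000 in
/-- Exactness of the residual `σ`: if `r` is the correctly rounded value of `1/x`, then
`|1 - x·r| ≤ u(1+u)` and `0.5 - 0.5·x·r` is exactly representable in `Fp p`. -/
theorem division_residual_exact (p : ℕ) (hp : 1 ≤ p) (u : ℝ)
    (hu : u = (2 : ℝ) ^ (-(p : ℤ))) (x r : ℝ) (hx : x ∈ Fp p) (hxpos : 0 < x)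
    (hr : r ∈ Fp p) (hnear : ∀ f ∈ Fp p, |r - 1 / x| ≤ |f - 1 / x|) :
    |1 - x * r| ≤ u * (1 + u) ∧ (0.5 - 0.5 * x * r) ∈ Fp p := by
  have h2 : (0:ℝ) < 2 := two_pos
  have h2' : (2:ℝ) ≠ 0 := two_ne_zero
  have hpz : (1:ℤ) ≤ (p:ℤ) := by exact_mod_cast hp
  obtain ⟨M, E, hM1, hM2, hxe⟩ := Fp_normalize p hp hx (ne_of_gt hxpos)
  have hE : (0:ℝ) < (2:ℝ)^E := zpow_pos h2 E
  have hMpos : (0:ℝ) < (M:ℝ) := by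
    have h0 : (0:ℝ) < (M:ℝ) * (2:ℝ)^E := hxe ▸ hxpos
    nlinarith
  have hMZ : (0:ℤ) < M := by exact_mod_cast hMpos
  rw [abs_of_pos hMZ] at hM1 hM2
  -- real versions of the significand bounds
  have hM1r : (2:ℝ)^((p:ℤ)-1) ≤ (M:ℝ) := by
    have h1 : ((2:ℤ)^(p-1) : ℝ) ≤ (M:ℝ) := by exact_mod_cast hM1
    have h2e : (2:ℝ)^((p:ℤ)-1) = (2:ℝ)^(p-1 : ℕ) := by
      rw [← zpow_natCast]; congr 1; omega
    rw [h2e]; exact_mod_cast h1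
  have hM2r : (M:ℝ) < (2:ℝ)^(p:ℤ) := by
    have h1 : (M:ℝ) < ((2:ℤ)^p : ℝ) := by exact_mod_cast hM2
    rw [zpow_natCast]; exact_mod_cast h1
  -- the witness float near 1/x, giving the half-ulp bound
  set y : ℝ := (2:ℝ)^(2*(p:ℤ) - 1) / M with hy
  set K : ℤ := round y with hK
  have hKy : |(K:ℝ) - y| ≤ 1/2 := by
    rw [abs_sub_comm]; exact abs_sub_round y
  have hypos : 0 < y := div_pos (zpow_pos h2 _) hMpos
  have hyle : y ≤ (2:ℝ)^(p:ℤ) := by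
    rw [hy, div_le_iff₀ hMpos]
    calc (2:ℝ)^(2*(p:ℤ)-1) = (2:ℝ)^(p:ℤ) * (2:ℝ)^((p:ℤ)-1) := by
          rw [← zpow_add₀ h2']; congr 1; ring
      _ ≤ (2:ℝ)^(p:ℤ) * M := by gcongr
  have hK1 : |K| ≤ 2^p := by
    have hb : |(K:ℝ)| < (2:ℝ)^(p:ℤ) + 1 := by
      calc |(K:ℝ)| ≤ |(K:ℝ) - y| + |y| := by
            have := abs_add_le ((K:ℝ) - y) y; simpa using this
        _ ≤ 1/2 + (2:ℝ)^(p:ℤ) := by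
            rw [abs_of_pos hypos]; linarith
        _ < (2:ℝ)^(p:ℤ) + 1 := by linarith
    have hb' : |(K:ℝ)| < (2:ℝ)^(p:ℕ) + 1 := by
      rw [← zpow_natCast (2:ℝ) p]; exact hb
    have : |K| < 2^p + 1 := by exact_mod_cast hb'
    omega
  set F0 : ℤ := -E - 2*(p:ℤ) + 1 with hF0
  have hkey : y * (2:ℝ)^F0 = 1/x := by
    have e1 : (2:ℝ)^(2*(p:ℤ)-1) * (2:ℝ)^F0 = (2:ℝ)^(-E) := by
      rw [← zpow_add₀ h2']; congr 1; rw [hF0]; ring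
    rw [hy, hxe, div_mul_eq_mul_div, e1, zpow_neg, one_div, mul_inv]
    rw [div_eq_mul_inv]; ring
  have hfx : (K:ℝ) * (2:ℝ)^F0 - 1/x = ((K:ℝ) - y) * (2:ℝ)^F0 := by
    rw [sub_mul, hkey]
  have hfmem : (K:ℝ) * (2:ℝ)^F0 ∈ Fp p := mem_Fp_of_le p hp K F0 hK1
  have hhalf : |r - 1/x| ≤ (2:ℝ)^(-E - 2*(p:ℤ)) := by
    calc |r - 1/x| ≤ |(K:ℝ)*(2:ℝ)^F0 - 1/x| := hnear _ hfmem
      _ = |(K:ℝ) - y| * (2:ℝ)^F0 := by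
          rw [hfx, abs_mul, abs_of_pos (zpow_pos h2 F0)]
      _ ≤ (1/2) * (2:ℝ)^F0 := by gcongr
      _ = (2:ℝ)^(-E - 2*(p:ℤ)) := by
          rw [show (1/2 : ℝ) = (2:ℝ)^(-1 : ℤ) by norm_num, ← zpow_add₀ h2']
          congr 1; rw [hF0]; ring
  -- bounds on 1/x
  have hxinv_ub : 1/x ≤ (2:ℝ)^(-E - (p:ℤ) + 1) := by
    rw [hxe, div_le_iff₀ (by positivity)]
    calc (1:ℝ) = (2:ℝ)^(-E-(p:ℤ)+1) * ((2:ℝ)^((p:ℤ)-1) * (2:ℝ)^E) := by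
          rw [← zpow_add₀ h2', ← zpow_add₀ h2']
          rw [show -E-(p:ℤ)+1 + ((p:ℤ)-1+E) = 0 by ring, zpow_zero]
      _ ≤ (2:ℝ)^(-E-(p:ℤ)+1) * ((M:ℝ) * (2:ℝ)^E) := by gcongr
  have hxinv_lb : (2:ℝ)^(-E - (p:ℤ)) < 1/x := by
    rw [hxe, lt_div_iff₀ (by positivity)]
    calc (2:ℝ)^(-E-(p:ℤ)) * ((M:ℝ) * (2:ℝ)^E) < (2:ℝ)^(-E-(p:ℤ)) * ((2:ℝ)^(p:ℤ) * (2:ℝ)^E) := by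
          gcongr
      _ = 1 := by
          rw [← zpow_add₀ h2', ← zpow_add₀ h2']
          rw [show -E-(p:ℤ) + ((p:ℤ)+E) = 0 by ring, zpow_zero]
  -- residual bound
  have hres : |1 - x*r| ≤ (M:ℝ) * (2:ℝ)^(-(2*(p:ℤ))) := by
    have e1 : 1 - x*r = x * (1/x - r) := by field_simp
    rw [e1, abs_mul, abs_of_pos hxpos]
    calc x * |1/x - r| ≤ x * (2:ℝ)^(-E-2*(p:ℤ)) := by
          gcongr
          rw [abs_sub_comm]; exact hhalf
      _ = (M:ℝ) * (2:ℝ)^(-(2*(p:ℤ))) := by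
          rw [hxe, mul_assoc, ← zpow_add₀ h2']
          congr 2; ring
  have hupos : 0 < u := by rw [hu]; positivity
  have part1 : |1 - x * r| ≤ u * (1 + u) := by
    have h3 : (M:ℝ) * (2:ℝ)^(-(2*(p:ℤ))) < (2:ℝ)^(p:ℤ) * (2:ℝ)^(-(2*(p:ℤ))) := by
      gcongr
    have h4 : (2:ℝ)^(p:ℤ) * (2:ℝ)^(-(2*(p:ℤ))) = u := by
      rw [hu, ← zpow_add₀ h2']; congr 1; ring
    nlinarith [hres]
  -- r is positive and bounded
  have hd1 : (2:ℝ)^(-E-2*(p:ℤ)) ≤ (2:ℝ)^(-E-(p:ℤ)-1) :=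
    zpow_le_zpow_right₀ (by norm_num) (by omega)
  have hdub : 1/x - r ≤ (2:ℝ)^(-E-2*(p:ℤ)) := by
    have := abs_le.mp hhalf; linarith [this.1]
  have hdlb : r - 1/x ≤ (2:ℝ)^(-E-2*(p:ℤ)) := by
    have := abs_le.mp hhalf; linarith [this.2]
  have he2 : (2:ℝ)^(-E-(p:ℤ)) = 2 * (2:ℝ)^(-E-(p:ℤ)-1) := by
    have e : (2:ℝ)^(-E-(p:ℤ)) = (2:ℝ)^(1 + (-E-(p:ℤ)-1)) := by congr 1; ring
    rw [e, zpow_add₀ h2', zpow_one]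
  have hrlb : (2:ℝ)^(-E-(p:ℤ)-1) < r := by linarith
  have hrpos : 0 < r := lt_trans (zpow_pos h2 _) hrlb
  have he3 : (2:ℝ)^(-E-(p:ℤ)+2) = 2 * (2:ℝ)^(-E-(p:ℤ)+1) := by
    have e : (2:ℝ)^(-E-(p:ℤ)+2) = (2:ℝ)^(1 + (-E-(p:ℤ)+1)) := by congr 1; ring
    rw [e, zpow_add₀ h2', zpow_one]
  have hd2 : (2:ℝ)^(-E-2*(p:ℤ)) ≤ (2:ℝ)^(-E-(p:ℤ)+1) :=
    zpow_le_zpow_right₀ (by norm_num) (by omega)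
  have hrub : r < (2:ℝ)^(-E-(p:ℤ)+2) := by
    have hlt : (2:ℝ)^(-E-2*(p:ℤ)) < (2:ℝ)^(-E-(p:ℤ)+1) := by
      apply zpow_lt_zpow_right₀ (by norm_num : (1:ℝ) < 2) (by omega)
    linarith
  -- normalize r
  obtain ⟨N, F, hN1, hN2, hre⟩ := Fp_normalize p hp hr (ne_of_gt hrpos)
  have hF2 : (0:ℝ) < (2:ℝ)^F := zpow_pos h2 F
  have hNpos : (0:ℝ) < (N:ℝ) := by
    have h0 : (0:ℝ) < (N:ℝ) * (2:ℝ)^F := hre ▸ hrpos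
    nlinarith
  have hNZ : (0:ℤ) < N := by exact_mod_cast hNpos
  rw [abs_of_pos hNZ] at hN1 hN2
  have hN1r : (2:ℝ)^((p:ℤ)-1) ≤ (N:ℝ) := by
    have h1 : ((2:ℤ)^(p-1) : ℝ) ≤ (N:ℝ) := by exact_mod_cast hN1
    have h2e : (2:ℝ)^((p:ℤ)-1) = (2:ℝ)^(p-1 : ℕ) := by
      rw [← zpow_natCast]; congr 1; omega
    rw [h2e]; exact_mod_cast h1
  have hN2r : (N:ℝ) < (2:ℝ)^(p:ℤ) := by
    have h1 : (N:ℝ) < ((2:ℤ)^p : ℝ) := by exact_mod_cast hN2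
    rw [zpow_natCast]; exact_mod_cast h1
  -- bounds on F
  have hFlb : -E - 2*(p:ℤ) ≤ F := by
    have h5 : r < (2:ℝ)^(F + (p:ℤ)) := by
      rw [hre, zpow_add₀ h2']
      calc (N:ℝ) * (2:ℝ)^F < (2:ℝ)^(p:ℤ) * (2:ℝ)^F := by gcongr
        _ = (2:ℝ)^F * (2:ℝ)^(p:ℤ) := by ring
    have h6 : (2:ℝ)^(-E-(p:ℤ)-1) < (2:ℝ)^(F + (p:ℤ)) := lt_trans hrlb h5
    have := (zpow_lt_zpow_iff_right₀ (by norm_num : (1:ℝ) < 2)).mp h6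
    omega
  have hFub : F ≤ -E - 2*(p:ℤ) + 2 := by
    have h5 : (2:ℝ)^(F + (p:ℤ) - 1) ≤ r := by
      rw [hre, zpow_sub₀ h2', zpow_add₀ h2']
      calc (2:ℝ)^F * (2:ℝ)^(p:ℤ) / 2^(1:ℤ) = (2:ℝ)^((p:ℤ)-1) * (2:ℝ)^F := by
            rw [zpow_sub₀ h2']; ring
        _ ≤ (N:ℝ) * (2:ℝ)^F := by gcongr
    have h6 : (2:ℝ)^(F + (p:ℤ) - 1) < (2:ℝ)^(-E-(p:ℤ)+2) := lt_of_le_of_lt h5 hrub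
    have := (zpow_lt_zpow_iff_right₀ (by norm_num : (1:ℝ) < 2)).mp h6
    omega
  -- the exact representation
  set k : ℤ := -(E+F) with hk
  have hk1 : 2*(p:ℤ) - 2 ≤ k := by omega
  have hk2 : k ≤ 2*(p:ℤ) := by omega
  have hk0 : 0 ≤ k := by omega
  set T : ℤ := 2^(k.toNat) - M*N with hT
  have hcast : ((2:ℤ)^(k.toNat) : ℝ) = (2:ℝ)^k := by
    push_cast
    rw [← zpow_natCast (2:ℝ) k.toNat]
    congr 1
    omega
  have hkk : (2:ℝ)^k * ((2:ℝ)^E * (2:ℝ)^F) = 1 := by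
    rw [← zpow_add₀ h2', ← zpow_add₀ h2']
    rw [show k + (E + F) = 0 by omega, zpow_zero]
  have hEF : (2:ℝ)^(E+F-1) = (2:ℝ)^E * (2:ℝ)^F / 2 := by
    rw [zpow_sub₀ h2', zpow_add₀ h2']; norm_num
  have hcast2 : (2:ℝ)^(k.toNat) = (2:ℝ)^k := by
    rw [← zpow_natCast (2:ℝ) k.toNat]; congr 1; omega
  have hval : 0.5 - 0.5 * x * r = (T:ℝ) * (2:ℝ)^(E+F-1) := by
    rw [hxe, hre, hT, hEF]
    push_cast
    rw [hcast2]
    linear_combination (-(0.5:ℝ)) * hkk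
  have hTb : |T| < 2^p := by
    have hEFpos : (0:ℝ) < (2:ℝ)^(E+F-1) := zpow_pos h2 _
    have hTr : |(T:ℝ)| * (2:ℝ)^(E+F-1) = |0.5 - 0.5*x*r| := by
      rw [hval, abs_mul, abs_of_pos hEFpos]
    have habs05 : |0.5 - 0.5*x*r| = 0.5 * |1 - x*r| := by
      rw [show (0.5:ℝ) - 0.5*x*r = 0.5 * (1 - x*r) by ring, abs_mul]
      norm_num
    have hb1 : |(T:ℝ)| * (2:ℝ)^(E+F-1) ≤ 0.5 * ((M:ℝ) * (2:ℝ)^(-(2*(p:ℤ)))) := by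
      rw [hTr, habs05]
      linarith [hres]
    have hkE : (2:ℝ)^(-(2*(p:ℤ))-1) ≤ (2:ℝ)^(E+F-1) :=
      zpow_le_zpow_right₀ one_le_two (by omega)
    have e5 : (M:ℝ) * (2:ℝ)^(-(2*(p:ℤ))-1) = 0.5 * ((M:ℝ) * (2:ℝ)^(-(2*(p:ℤ)))) := by
      have e : (2:ℝ)^(-(2*(p:ℤ))-1) = (2:ℝ)^(-(2*(p:ℤ)) + (-1)) := by congr 1
      rw [e, zpow_add₀ h2']
      norm_num
      ring
    have hTle : |(T:ℝ)| ≤ (M:ℝ) := by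
      have h6 : |(T:ℝ)| * (2:ℝ)^(-(2*(p:ℤ))-1) ≤ (M:ℝ) * (2:ℝ)^(-(2*(p:ℤ))-1) := by
        calc |(T:ℝ)| * (2:ℝ)^(-(2*(p:ℤ))-1) ≤ |(T:ℝ)| * (2:ℝ)^(E+F-1) := by gcongr
          _ ≤ 0.5 * ((M:ℝ) * (2:ℝ)^(-(2*(p:ℤ)))) := hb1
          _ = (M:ℝ) * (2:ℝ)^(-(2*(p:ℤ))-1) := e5.symm
      exact le_of_mul_le_mul_right h6 (zpow_pos h2 _)
    have hb5 : |(T:ℝ)| < (2:ℝ)^(p:ℕ) := by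
      rw [← zpow_natCast (2:ℝ) p]
      linarith
    have : |T| < 2^p := by exact_mod_cast hb5
    exact this
  exact ⟨part1, T, E+F-1, hTb, hval⟩
end

section
/- For x > 0, y > 0 with ν defined by √(1/x) = y(1+ν), |ν| < 1, and ν̄ = (1-x y²)/2, the Halley-compensated value y_H = y + y·ν̄(1 + (3/2)ν̄) satisfies |y_H - √(1/x)| ≤ C·y·|ν|³ for an explicit constant C (e.g. C = 20) when |ν| ≤ 1/4. -/
/-- Exact-arithmetic Halley compensation: with `√(1/x) = y(1+ν)`, `|ν| ≤ 1/4`, and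
`ν̄ = (1 - x y²)/2`, the value `y_H = y + y·ν̄(1 + (3/2)ν̄)` satisfies
`|y_H - √(1/x)| ≤ 20·y·|ν|³`. -/
theorem halley_compensation_error (x y ν : ℝ) (hx : 0 < x) (hy : 0 < y)
    (hν : |ν| ≤ 1 / 4) (h : Real.sqrt (1 / x) = y * (1 + ν)) :
    |y + y * ((1 - x * y ^ 2) / 2) * (1 + 3 / 2 * ((1 - x * y ^ 2) / 2)) -
        Real.sqrt (1 / x)| ≤ 20 * y * |ν| ^ 3 := by
  obtain ⟨hν1, hν2⟩ := abs_le.mp hν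
  have ht : (0:ℝ) < 1 + ν := by linarith
  have hsq : (1:ℝ) / x = (y * (1 + ν)) ^ 2 := by
    rw [← h, Real.sq_sqrt (by positivity)]
  have hxy : x * y ^ 2 = 1 / (1 + ν) ^ 2 := by
    have hx' : x ≠ 0 := ne_of_gt hx
    have : x * (y * (1 + ν)) ^ 2 = 1 := by
      field_simp at hsq
      rw [mul_comm]
      linear_combination hsq.symm
    field_simp
    nlinarith [this]
  rw [hxy, h]
  have key : y + y * ((1 - 1 / (1 + ν) ^ 2) / 2) * (1 + 3 / 2 * ((1 - 1 / (1 + ν) ^ 2) / 2)) -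
      y * (1 + ν) = y * (-(ν ^ 3) * (20 + 25 * ν + 8 * ν ^ 2) / (8 * (1 + ν) ^ 4)) := by
    field_simp
    ring
  rw [key, abs_mul, abs_of_pos hy]
  rw [show (20:ℝ) * y * |ν| ^ 3 = y * (20 * |ν| ^ 3) by ring]
  apply mul_le_mul_of_nonneg_left _ (le_of_lt hy)
  rw [abs_div, abs_mul, abs_neg, abs_pow]
  rw [div_le_iff₀ (by positivity : (0:ℝ) < |8 * (1 + ν) ^ 4|)]
  have h8 : |8 * (1 + ν) ^ 4| = 8 * (1 + ν) ^ 4 := abs_of_pos (by positivity)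
  rw [h8]
  have hc : |20 + 25 * ν + 8 * ν ^ 2| ≤ 27 := by
    rw [abs_le]; constructor <;> nlinarith [sq_nonneg ν, sq_abs ν]
  have ht4 : (8:ℝ) * (1 + ν) ^ 4 ≥ 81 / 32 := by nlinarith [sq_nonneg ((1+ν)^2 - 9/16), sq_nonneg (1+ν)]
  have hp : (0:ℝ) ≤ |ν| ^ 3 := by positivity
  nlinarith [mul_le_mul_of_nonneg_left hc hp, mul_le_mul_of_nonneg_left ht4 hp]
end
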